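/- arXiv:1709.02013 — 4 statements merged into one kernel-verified Lean document; each statement's English description precedes it below -/
import Mathlib

section
/- Every nonempty proper vertex subset X of the n-dimensional hypercube Q_n satisfies |X| + |N(X)| ≥ n + 1, where N(X) is the external neighborhood of X. -/
/-- The hypercube graph on `Fin n → Bool`: adjacency = Hamming distance 1. -/
def Qn (n : ℕ) : SimpleGraph (Fin n → Bool) where
  Adj x y := (Finset.univ.filter fun i => x i ≠ y i).card = 1
  symm := by
    constructor
    intro x y h
    convert h using 2
    ext i
    simp [ne_comm]
  loopless := by
    constructor
    intro x h
    simp at h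

/-- Bitwise complement. -/
def bcomp (n : ℕ) (x : Fin n → Bool) : Fin n → Bool := fun i => !(x i)

/-- Crossing-edge adjacency in HCN_n. -/
def CAdj (n : ℕ) (u v : (Fin n → Bool) × (Fin n → Bool)) : Prop :=
  (u.1 ≠ u.2 ∧ v = (u.2, u.1)) ∨
  (u.1 = u.2 ∧ v = (bcomp n u.1, bcomp n u.1)) ∨
  (v.1 ≠ v.2 ∧ u = (v.2, v.1)) ∨
  (v.1 = v.2 ∧ u = (bcomp n v.1, bcomp n v.1))

/-- The hierarchical cubic network HCN_n. -/
def HCN (n : ℕ) : SimpleGraph ((Fin n → Bool) × (Fin n → Bool)) where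
  Adj u v := u ≠ v ∧ ((u.1 = v.1 ∧ (Qn n).Adj u.2 v.2) ∨ CAdj n u v)
  symm := by
    constructor
    rintro u v ⟨hne, h⟩
    refine ⟨hne.symm, ?_⟩
    rcases h with ⟨h1, h2⟩ | h | h | h | h
    · exact Or.inl ⟨h1.symm, (Qn n).adj_symm h2⟩
    · exact Or.inr (Or.inr (Or.inr (Or.inl h)))
    · exact Or.inr (Or.inr (Or.inr (Or.inr h)))
    · exact Or.inr (Or.inl h)
    · exact Or.inr (Or.inr (Or.inl h))
  loopless := by constructor; intro u h; exact h.1 rfl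

open scoped Classical in
/-- Every nonempty proper vertex subset X of Q_n satisfies |X| + |N(X)| ≥ n + 1. -/
theorem stmt2 (n : ℕ) (X : Finset (Fin n → Bool)) (hX : X.Nonempty)
    (hXp : X ≠ Finset.univ) :
    n + 1 ≤
      X.card + (Finset.univ.filter
        (fun y => y ∉ X ∧ ∃ x ∈ X, (Qn n).Adj x y)).card := by
  classical
  obtain ⟨x, hx⟩ := hX
  set N := Finset.univ.filter
      (fun y => y ∉ X ∧ ∃ x ∈ X, (Qn n).Adj x y) with hN
  set S := Finset.univ.filter (fun y => (Qn n).Adj x y) with hS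
  have hScard : S.card = n := by
    have key : (Finset.univ : Finset (Fin n)).card = S.card := by
      apply Finset.card_bij (fun i _ => Function.update x i (!(x i)))
      · intro i _
        simp only [hS, Finset.mem_filter, Finset.mem_univ, true_and]; simp only [Qn]
        have : (Finset.univ.filter fun j => x j ≠ Function.update x i (!(x i)) j)
            = {i} := by
          ext j
          simp only [Finset.mem_filter, Finset.mem_univ, true_and, Finset.mem_singleton]
          by_cases hj : j = i
          · subst hj; simp only [Function.update_self]; cases x j <;> simp
          · simp [Function.update_of_ne hj, hj]
        rw [this, Finset.card_singleton]
      · intro a _ b _ hab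
        by_contra hne
        have := congrFun hab a
        rw [Function.update_self, Function.update_of_ne hne] at this
        cases x a <;> simp_all
      · intro y hy
        simp only [hS, Finset.mem_filter, Finset.mem_univ, true_and] at hy; simp only [Qn] at hy
        obtain ⟨i, hi⟩ := Finset.card_eq_one.mp hy
        have hixy : x i ≠ y i := by
          have : i ∈ Finset.univ.filter fun j => x j ≠ y j := by
            rw [hi]; exact Finset.mem_singleton_self i
          exact (Finset.mem_filter.mp this).2
        refine ⟨i, Finset.mem_univ i, funext fun j => ?_⟩
        by_cases hj : j = i
        · subst hj
          rw [Function.update_self]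
          cases hx : x j <;> cases hy' : y j <;> simp_all
        · rw [Function.update_of_ne hj]
          by_contra hne
          have : j ∈ ({i} : Finset (Fin n)) := by
            rw [← hi]; simp [hne]
          exact hj (Finset.mem_singleton.mp this)
    have := key.symm
    simpa using this
  have h1 : S \ X ⊆ N := by
    intro y hy
    rw [Finset.mem_sdiff, hS, Finset.mem_filter] at hy
    rw [hN, Finset.mem_filter]
    exact ⟨Finset.mem_univ _, hy.2, x, hx, hy.1.2⟩
  have h2 : S ∩ X ⊆ X.erase x := by
    intro y hy
    rw [Finset.mem_inter, hS, Finset.mem_filter] at hy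
    refine Finset.mem_erase.mpr ⟨?_, hy.2⟩
    rintro rfl
    exact (Qn n).loopless.irrefl _ hy.1.2
  have hsplit : S.card = (S \ X).card + (S ∩ X).card := by
    rw [Finset.card_sdiff_add_card_inter]
  have hXpos : 1 ≤ X.card := Finset.card_pos.mpr ⟨x, hx⟩
  have hle1 : (S \ X).card ≤ N.card := Finset.card_le_card h1
  have hle2 : (S ∩ X).card ≤ X.card - 1 := by
    calc (S ∩ X).card ≤ (X.erase x).card := Finset.card_le_card h2
    _ = X.card - 1 := Finset.card_erase_of_mem hx
  omega
end

section
/- Let n ≥ 2 and 0 ≤ h ≤ n−1. In HCN_n, fix x ∈ {0,1}^n and let X = {(x,y) : the last n−h coordinates of y are all 0}. Let S be the set of all vertices of HCN_n outside X adjacent to some vertex of X. Then |S| = 2^h·(n−h) + 2^h = 2^h·(n+1−h). -/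
open Finset

lemma bcomp_ne (n : ℕ) (hn : 0 < n) (x : Fin n → Bool) : bcomp n x ≠ x := by
  intro hx
  have := congrFun hx ⟨0, hn⟩
  simp [bcomp] at this

lemma bcomp_bcomp (n : ℕ) (x : Fin n → Bool) : bcomp n (bcomp n x) = x := by
  funext i; simp [bcomp]

open scoped Classical in
lemma card_T (n h : ℕ) (hhn : h ≤ n) :
    (univ.filter fun y : Fin n → Bool => ∀ i : Fin n, h ≤ (i:ℕ) → y i = false).card = 2 ^ h := by
  have : (univ.filter fun y : Fin n → Bool => ∀ i : Fin n, h ≤ (i:ℕ) → y i = false).card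
      = (univ : Finset (Fin h → Bool)).card := by
    refine Finset.card_nbij' (fun y => fun j => y (Fin.castLE hhn j))
      (fun g => fun i => if hi : (i:ℕ) < h then g ⟨(i:ℕ), hi⟩ else false) ?_ ?_ ?_ ?_
    · intro y hy
      simp
    · intro g hg
      simp only [mem_coe, mem_filter, mem_univ, true_and]
      intro i hi
      rw [dif_neg (by omega)]
    · intro y hy
      simp only [mem_coe, mem_filter, mem_univ, true_and] at hy
      funext i
      dsimp only
      by_cases hi : (i:ℕ) < h
      · rw [dif_pos hi]; congr 1
      · rw [dif_neg hi, hy i (by omega)]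
    · intro g hg
      funext j
      dsimp only
      rw [dif_pos (show ((Fin.castLE hhn j : Fin n) : ℕ) < h from j.2)]
      congr 1
  rw [this]
  simp

open scoped Classical in
lemma card_I (n h : ℕ) (hhn : h < n) :
    (univ.filter fun i : Fin n => h ≤ (i:ℕ)).card = n - h := by
  have : (univ.filter fun i : Fin n => h ≤ (i:ℕ)) = Finset.Ici (⟨h, hhn⟩ : Fin n) := by
    ext i
    simp [Fin.le_def]
  rw [this, Fin.card_Ici]

lemma prod_eq {α β : Type*} {p q : α × β} (h1 : p.1 = q.1) (h2 : p.2 = q.2) : p = q := by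
  obtain ⟨a, b⟩ := p; obtain ⟨c, d⟩ := q
  simp_all

lemma CAdj_iff (n : ℕ) (u v : (Fin n → Bool) × (Fin n → Bool)) :
    CAdj n u v ↔ (u.1 ≠ u.2 ∧ v = (u.2, u.1)) ∨ (u.1 = u.2 ∧ v = (bcomp n u.1, bcomp n u.1)) := by
  constructor
  · rintro (h | h | ⟨h1, h2⟩ | ⟨h1, h2⟩)
    · exact Or.inl h
    · exact Or.inr h
    · subst h2
      exact Or.inl ⟨fun e => h1 e.symm, prod_eq rfl rfl⟩
    · subst h2
      refine Or.inr ⟨rfl, ?_⟩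
      show v = (bcomp n (bcomp n v.1), bcomp n (bcomp n v.1))
      rw [bcomp_bcomp]
      exact prod_eq rfl h1.symm
  · rintro (h | h)
    · exact Or.inl h
    · exact Or.inr (Or.inl h)

open scoped Classical in
/-- The map sending a slice element (plus an optional tail index) to a boundary vertex. -/
noncomputable def Fmap (n : ℕ) (x : Fin n → Bool) :
    (Fin n → Bool) × Option (Fin n) → (Fin n → Bool) × (Fin n → Bool) :=
  fun p => match p.2 with
  | some i => (x, Function.update p.1 i true)
  | none => if p.1 = x then (bcomp n x, bcomp n x) else (p.1, x)

open scoped Classical in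
lemma key (n h : ℕ) (hn : 2 ≤ n) (hh : h ≤ n - 1) (x : Fin n → Bool) :
    (Finset.univ.filter
      (fun v : (Fin n → Bool) × (Fin n → Bool) =>
        v ∉ Finset.univ.filter
          (fun v : (Fin n → Bool) × (Fin n → Bool) =>
            v.1 = x ∧ ∀ i : Fin n, h ≤ (i : ℕ) → v.2 i = false) ∧
        ∃ u ∈ Finset.univ.filter
          (fun v : (Fin n → Bool) × (Fin n → Bool) =>
            v.1 = x ∧ ∀ i : Fin n, h ≤ (i : ℕ) → v.2 i = false), (HCN n).Adj u v)).card
      = 2 ^ h * (n + 1 - h) := by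
  have hpos : 0 < n := by omega
  have hhn : h < n := by omega
  set T : Finset (Fin n → Bool) :=
    univ.filter fun y : Fin n → Bool => ∀ i : Fin n, h ≤ (i:ℕ) → y i = false with hT
  set I : Finset (Option (Fin n)) :=
    insert none ((univ.filter fun i : Fin n => h ≤ (i:ℕ)).image some) with hI
  have hmemT : ∀ y, y ∈ T ↔ ∀ i : Fin n, h ≤ (i:ℕ) → y i = false := by
    intro y; simp [hT]
  have hbne : bcomp n x ≠ x := bcomp_ne n hpos x
  -- the boundary set equals the image of T ×ˢ I under Fmap
  have hset : (Finset.univ.filter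
      (fun v : (Fin n → Bool) × (Fin n → Bool) =>
        v ∉ Finset.univ.filter
          (fun v : (Fin n → Bool) × (Fin n → Bool) =>
            v.1 = x ∧ ∀ i : Fin n, h ≤ (i : ℕ) → v.2 i = false) ∧
        ∃ u ∈ Finset.univ.filter
          (fun v : (Fin n → Bool) × (Fin n → Bool) =>
            v.1 = x ∧ ∀ i : Fin n, h ≤ (i : ℕ) → v.2 i = false), (HCN n).Adj u v))
      = (T ×ˢ I).image (Fmap n x) := by
    ext v
    simp only [mem_filter, mem_univ, true_and, not_and, mem_image, mem_product, hmemT,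
      hI, mem_insert, mem_image, Finset.mem_filter]
    constructor
    · rintro ⟨hvX, u, ⟨hu1, hu2⟩, hne, hadj⟩
      rcases hadj with ⟨heq, hq⟩ | hc
      · -- internal edge
        obtain ⟨i, hi⟩ := Finset.card_eq_one.mp hq
        have hdiff : u.2 i ≠ v.2 i := by
          have : i ∈ univ.filter fun j => u.2 j ≠ v.2 j := by rw [hi]; exact mem_singleton_self i
          simpa using this
        have hsame : ∀ j, j ≠ i → u.2 j = v.2 j := by
          intro j hj
          by_contra hcon
          have : j ∈ univ.filter fun j => u.2 j ≠ v.2 j := by simpa using hcon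
          rw [hi, mem_singleton] at this
          exact hj this
        have hhi : h ≤ (i:ℕ) := by
          by_contra hcon
          apply hvX (heq ▸ hu1)
          intro j hjh
          rw [← hsame j (by rintro rfl; omega), hu2 j hjh]
        refine ⟨(u.2, some i), ⟨hu2, Or.inr ⟨i, hhi, rfl⟩⟩, ?_⟩
        show (x, Function.update u.2 i true) = v
        have hv2 : Function.update u.2 i true = v.2 := by
          funext j
          by_cases hj : j = i
          · subst hj
            rw [Function.update_self]
            have h1 : u.2 j = false := hu2 j hhi
            rw [h1] at hdiff
            cases hb : v.2 j
            · exact absurd hb.symm hdiff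
            · rfl
          · rw [Function.update_of_ne hj, hsame j hj]
        exact prod_eq (by simpa using (heq ▸ hu1 : v.1 = x).symm) hv2
      · rw [CAdj_iff] at hc
        rcases hc with ⟨h12, hv⟩ | ⟨h12, hv⟩
        · refine ⟨(u.2, none), ⟨hu2, Or.inl rfl⟩, ?_⟩
          show Fmap n x (u.2, none) = v
          rw [hv]
          simp only [Fmap]
          rw [if_neg (fun hc => h12 (hu1.trans hc.symm)), hu1]
        · refine ⟨(u.2, none), ⟨hu2, Or.inl rfl⟩, ?_⟩
          show Fmap n x (u.2, none) = v
          rw [hv]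
          simp only [Fmap]
          rw [if_pos (h12 ▸ hu1 : u.2 = x), hu1]
    · rintro ⟨⟨y, o⟩, ⟨hyT0, ho⟩, hF⟩
      have hyT : ∀ j : Fin n, h ≤ (j:ℕ) → y j = false := hyT0
      rcases ho with rfl | ⟨i, hhi, rfl⟩
      · -- external neighbor
        by_cases hyx : y = x
        · have hFv : v = (bcomp n x, bcomp n x) := by
            rw [← hF]; simp only [Fmap]; rw [if_pos hyx]
          subst hFv
          refine ⟨fun h1 _ => hbne h1, (x, x), ⟨rfl, hyx ▸ hyT⟩, ?_, ?_⟩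
          · intro hc
            exact hbne (congrArg Prod.fst hc).symm
          · exact Or.inr (CAdj_iff n _ _ |>.mpr (Or.inr ⟨rfl, rfl⟩))
        · have hFv : v = (y, x) := by
            rw [← hF]; simp only [Fmap]; rw [if_neg hyx]
          subst hFv
          refine ⟨fun h1 _ => hyx h1, (x, y), ⟨rfl, hyT⟩, ?_, ?_⟩
          · intro hc
            exact hyx (congrArg Prod.fst hc).symm
          · exact Or.inr (CAdj_iff n _ _ |>.mpr (Or.inl ⟨fun e => hyx e.symm, rfl⟩))
      · -- internal neighbor
        have hFv : v = (x, Function.update y i true) := by rw [← hF]; rfl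
        subst hFv
        refine ⟨?_, (x, y), ⟨rfl, hyT⟩, ?_, ?_⟩
        · intro _ hall
          have := hall i hhi
          simp at this
        · intro hc
          have := congrArg (fun p => p.2 i) hc
          simp only [Function.update_self] at this
          rw [hyT i hhi] at this
          exact Bool.false_ne_true this
        · refine Or.inl ⟨rfl, ?_⟩
          show (univ.filter fun j => y j ≠ Function.update y i true j).card = 1
          have : (univ.filter fun j => y j ≠ Function.update y i true j) = {i} := by
            ext j
            simp only [mem_filter, mem_univ, true_and, mem_singleton]
            constructor
            · intro hj
              by_contra hji
              rw [Function.update_of_ne hji] at hj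
              exact hj rfl
            · rintro rfl
              rw [Function.update_self, hyT _ hhi]
              simp
          rw [this, card_singleton]
  rw [hset]
  rw [Finset.card_image_of_injOn, Finset.card_product]
  · rw [card_T n h (le_of_lt hhn)]
    have hIcard : I.card = n - h + 1 := by
      rw [hI, Finset.card_insert_of_notMem (by simp), Finset.card_image_of_injective _ (Option.some_injective _), card_I n h hhn]
    rw [hIcard]
    congr 1
    omega
  · -- injectivity on T ×ˢ I
    rintro ⟨y, o⟩ hp ⟨y', o'⟩ hq hFeq
    simp only [mem_coe, mem_product, hmemT, hI, mem_insert, mem_image, mem_filter, mem_univ,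
      true_and] at hp hq
    obtain ⟨hyT0, ho⟩ := hp
    obtain ⟨hyT0', ho'⟩ := hq
    have hyT : ∀ j : Fin n, h ≤ (j:ℕ) → y j = false := hyT0
    have hyT' : ∀ j : Fin n, h ≤ (j:ℕ) → y' j = false := hyT0'
    have fst_none : ∀ z : Fin n → Bool, (Fmap n x (z, none)).1 ≠ x → True := fun _ _ => trivial
    rcases ho with rfl | ⟨i, hhi, rfl⟩ <;> rcases ho' with rfl | ⟨i', hhi', rfl⟩
    · -- none, none
      by_cases hyx : y = x <;> by_cases hyx' : y' = x
      · rw [hyx, hyx']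
      · exfalso
        have : (bcomp n x, bcomp n x) = ((y', x) : _ × _) := by
          rw [show ((bcomp n x, bcomp n x) : _ × _) = Fmap n x (y, none) from by
              simp only [Fmap]; rw [if_pos hyx], hFeq]
          simp only [Fmap]; rw [if_neg hyx']
        exact hbne (congrArg Prod.snd this)
      · exfalso
        have : ((y, x) : _ × _) = (bcomp n x, bcomp n x) := by
          rw [show ((y, x) : _ × _) = Fmap n x (y, none) from by
              simp only [Fmap]; rw [if_neg hyx], hFeq]
          simp only [Fmap]; rw [if_pos hyx']
        exact hbne (congrArg Prod.snd this).symm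
      · have : ((y, x) : _ × _) = ((y', x) : _ × _) := by
          rw [show ((y, x) : _ × _) = Fmap n x (y, none) from by
              simp only [Fmap]; rw [if_neg hyx], hFeq]
          simp only [Fmap]; rw [if_neg hyx']
        injection this with h1 h2
        rw [h1]
    · -- none, some
      exfalso
      have h1 : (Fmap n x (y, none)).1 ≠ x := by
        simp only [Fmap]
        by_cases hyx : y = x
        · rw [if_pos hyx]; exact hbne
        · rw [if_neg hyx]; exact hyx
      rw [hFeq] at h1
      exact h1 rfl
    · -- some, none
      exfalso
      have h1 : (Fmap n x (y', none)).1 ≠ x := by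
        simp only [Fmap]
        by_cases hyx : y' = x
        · rw [if_pos hyx]; exact hbne
        · rw [if_neg hyx]; exact hyx
      rw [← hFeq] at h1
      exact h1 rfl
    · -- some, some
      have h2 : Function.update y i true = Function.update y' i' true :=
        congrArg Prod.snd hFeq
      have hii : i = i' := by
        by_contra hii
        have := congrArg (fun f => f i) h2
        simp only [Function.update_self] at this
        rw [Function.update_of_ne hii, hyT' i hhi] at this
        simp at this
      subst hii
      have hyy : y = y' := by
        funext j
        by_cases hj : j = i
        · subst hj; rw [hyT j hhi, hyT' j hhi]
        · have := congrArg (fun f => f j) h2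
          simpa [Function.update_of_ne hj] using this
      rw [hyy]

set_option maxHeartbeats 1000000 in
open scoped Classical in
/-- For the subcube slice X = {(x,y) : last n-h coordinates of y are 0}, the
neighborhood S of X in HCN_n has exactly 2^h (n+1-h) vertices. -/
theorem stmt13 (n h : ℕ) (hn : 2 ≤ n) (hh : h ≤ n - 1) (x : Fin n → Bool) :
    letI X : Finset ((Fin n → Bool) × (Fin n → Bool)) :=
      Finset.univ.filter (fun v => v.1 = x ∧ ∀ i : Fin n, h ≤ (i : ℕ) → v.2 i = false)
    (Finset.univ.filter
      (fun v => v ∉ X ∧ ∃ u ∈ X, (HCN n).Adj u v)).card = 2 ^ h * (n + 1 - h) := by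
  rw [← key n h hn hh x]
  congr 1
  ext v
  simp only [Finset.mem_filter]
end

section
/- Let n ≥ 2, 0 ≤ h ≤ n−1, X = {(x,y) : last n−h coordinates of y are 0} in HCN_n, and S = N(X) its neighborhood. Then for every subcube x'Q_n with x' ≠ x, |S ∩ x'Q_n| ≤ 1. -/
open scoped Classical in
/-- With X the subcube slice in xQ_n and S = N(X), every other subcube x'Q_n
contains at most one vertex of S. -/
theorem stmt14 (n h : ℕ) (hn : 2 ≤ n) (hh : h ≤ n - 1) (x : Fin n → Bool) :
    letI X : Finset ((Fin n → Bool) × (Fin n → Bool)) :=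
      Finset.univ.filter (fun v => v.1 = x ∧ ∀ i : Fin n, h ≤ (i : ℕ) → v.2 i = false)
    letI S : Finset ((Fin n → Bool) × (Fin n → Bool)) :=
      Finset.univ.filter (fun v => v ∉ X ∧ ∃ u ∈ X, (HCN n).Adj u v)
    ∀ x' : Fin n → Bool, x' ≠ x → (S.filter (fun v => v.1 = x')).card ≤ 1 := by
  intro x' hx'
  set X : Finset ((Fin n → Bool) × (Fin n → Bool)) :=
    Finset.univ.filter (fun v => v.1 = x ∧ ∀ i : Fin n, h ≤ (i : ℕ) → v.2 i = false) with hX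
  set S : Finset ((Fin n → Bool) × (Fin n → Bool)) :=
    Finset.univ.filter (fun v => v ∉ X ∧ ∃ u ∈ X, (HCN n).Adj u v) with hS
  apply Finset.card_le_one.2
  -- key: any element of the filtered set is either (x', x) with x' tail-zero,
  -- or (bcomp n x, bcomp n x) with x tail-zero and x' = bcomp n x
  have key : ∀ v ∈ S.filter (fun v => v.1 = x'),
      (v = (x', x) ∧ ∀ i : Fin n, h ≤ (i : ℕ) → x' i = false) ∨
      (v = (bcomp n x, bcomp n x) ∧ x' = bcomp n x ∧
        ∀ i : Fin n, h ≤ (i : ℕ) → x i = false) := by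
    intro v hv
    simp only [Finset.mem_filter, Finset.mem_univ, true_and, hS, hX] at hv
    obtain ⟨⟨_, u, ⟨hu1, hu2⟩, hne, hadj⟩, hv1⟩ := hv
    rcases hadj with ⟨he, _⟩ | hC
    · exact absurd (by rw [← hv1, ← he, hu1]) hx'.symm
    · rcases hC with ⟨hne2, hveq⟩ | ⟨heq, hveq⟩ | ⟨hne2, hueq⟩ | ⟨heq, hueq⟩
      · left
        have : u.2 = x' := by rw [hveq] at hv1; exact hv1
        exact ⟨by rw [hveq, this, hu1], this ▸ hu2⟩
      · right
        have hxt : u.1 = x := hu1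
        rw [heq] at hxt
        refine ⟨by rw [hveq, heq, hxt], ?_, hxt ▸ heq ▸ hu2⟩
        rw [← hv1, hveq, heq, hxt]
      · left
        have h1 : v.2 = x := by
          have := congrArg Prod.fst hueq; simpa [hu1] using this.symm
        have h2 : u.2 = x' := by
          have := congrArg Prod.snd hueq; simp at this; rw [this, hv1]
        exact ⟨Prod.ext hv1 h1, h2 ▸ hu2⟩
      · right
        have h1 : v.1 = v.2 := heq
        have h2 : x = bcomp n v.1 := by
          have := congrArg Prod.fst hueq; rw [hu1] at this; exact this
        have hxv : v.1 = bcomp n x := by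
          rw [h2]; funext i; simp [bcomp]
        refine ⟨Prod.ext hxv (h1 ▸ hxv), hv1 ▸ hxv, ?_⟩
        intro i hi
        have := hu2 i hi
        rw [congrArg Prod.snd hueq] at this
        simp [bcomp] at this
        rw [h2]; simp [bcomp, this]
  intro a ha b hb
  -- an index ≥ h exists
  have hidx : h ≤ ((⟨n - 1, by omega⟩ : Fin n) : ℕ) := hh
  have contra : ∀ (hx'z : ∀ i : Fin n, h ≤ (i : ℕ) → x' i = false)
      (hxeq : x' = bcomp n x) (hxz : ∀ i : Fin n, h ≤ (i : ℕ) → x i = false), False := by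
    intro hx'z hxeq hxz
    have h1 := hx'z ⟨n - 1, by omega⟩ hidx
    have h2 := hxz ⟨n - 1, by omega⟩ hidx
    rw [hxeq] at h1
    simp [bcomp, h2] at h1
  rcases key a ha with ⟨ha1, ha2⟩ | ⟨ha1, ha2, ha3⟩ <;>
    rcases key b hb with ⟨hb1, hb2⟩ | ⟨hb1, hb2, hb3⟩
  · rw [ha1, hb1]
  · exact (contra ha2 hb2 hb3).elim
  · exact (contra hb2 ha2 ha3).elim
  · rw [ha1, hb1]
end

section
/- Let n ≥ 2 and 0 ≤ h ≤ n. Then HCN_n has an h-edge-cut of size 2^h·(n+1−h): there exists a set F of edges with |F| = 2^h·(n+1−h) such that HCN_n − F is disconnected and every vertex has at least h incident edges remaining. Hence λ^h(HCN_n) ≤ 2^h·(n+1−h). -/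
namespace Stmt16Aux

variable {n h : ℕ}

def ov (n : ℕ) : Fin n → Bool := fun _ => false
def iv (n : ℕ) : Fin n → Bool := fun _ => true

def flp (i : Fin n) (y : Fin n → Bool) : Fin n → Bool :=
  fun j => if j = i then !(y i) else y j

lemma flp_self (i : Fin n) (y : Fin n → Bool) : flp i y i = !(y i) := by simp [flp]
lemma flp_ne {i j : Fin n} (hji : j ≠ i) (y : Fin n → Bool) : flp i y j = y j := by
  simp [flp, hji]

lemma flp_ne_self (i : Fin n) (y : Fin n → Bool) : flp i y ≠ y := by
  intro hc
  have := congrFun hc i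
  rw [flp_self] at this
  simp at this

lemma flp_inj {i j : Fin n} {y : Fin n → Bool} (hf : flp i y = flp j y) : i = j := by
  by_contra hij
  have h1 := congrFun hf i
  rw [flp_self, flp_ne hij] at h1
  simp at h1

lemma flp_flp {i j : Fin n} {y : Fin n → Bool} (hf : flp j (flp i y) = y) : i = j := by
  by_contra hij
  have h1 := congrFun hf j
  rw [flp_self, flp_ne (Ne.symm hij)] at h1
  simp at h1

lemma qn_adj_flp (i : Fin n) (y : Fin n → Bool) : (Qn n).Adj y (flp i y) := by
  show (Finset.univ.filter fun j => y j ≠ flp i y j).card = 1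
  have he : (Finset.univ.filter fun j => y j ≠ flp i y j) = {i} := by
    ext j
    simp only [Finset.mem_filter, Finset.mem_univ, true_and, Finset.mem_singleton]
    rcases eq_or_ne j i with rfl | hji
    · rw [flp_self]; cases y j <;> simp
    · rw [flp_ne hji]; simp [hji]
  rw [he, Finset.card_singleton]

lemma qn_adj_decode {y z : Fin n → Bool} (hyz : (Qn n).Adj y z) : ∃ i, z = flp i y := by
  have hc : (Finset.univ.filter fun j => y j ≠ z j).card = 1 := hyz
  obtain ⟨i, hi⟩ := Finset.card_eq_one.mp hc
  refine ⟨i, funext fun j => ?_⟩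
  have hmem : ∀ j : Fin n, y j ≠ z j ↔ j = i := by
    intro j
    rw [← Finset.mem_singleton, ← hi]
    simp
  rcases eq_or_ne j i with rfl | hji
  · have h1 : y j ≠ z j := (hmem j).mpr rfl
    rw [flp_self]
    cases hy : y j <;> cases hz : z j <;> simp_all
  · have h1 : ¬ y j ≠ z j := fun hne => hji ((hmem j).mp hne)
    rw [flp_ne hji]
    push_neg at h1
    exact h1.symm

def Spred (n h : ℕ) (y : Fin n → Bool) : Prop := ∀ j : Fin n, h ≤ (j : ℕ) → y j = false

instance : DecidablePred (Spred n h) := fun _ => by unfold Spred; infer_instance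

lemma spred_ov : Spred n h (ov n) := fun _ _ => rfl

def crossv (n : ℕ) (y : Fin n → Bool) : (Fin n → Bool) × (Fin n → Bool) :=
  if y = ov n then (iv n, iv n) else (y, ov n)

lemma ov_ne_iv (hn : 0 < n) : ov n ≠ iv n := by
  intro hc
  have := congrFun hc ⟨0, hn⟩
  simp [ov, iv] at this

lemma crossv_ov : crossv n (ov n) = (iv n, iv n) := by simp [crossv]
lemma crossv_of_ne {y : Fin n → Bool} (hy : y ≠ ov n) : crossv n y = (y, ov n) := by
  simp [crossv, hy]

lemma crossv_fst_ne (hn : 0 < n) (y : Fin n → Bool) : (crossv n y).1 ≠ ov n := by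
  unfold crossv
  split
  · exact fun hc => ov_ne_iv hn hc.symm
  · next hne => exact hne

lemma bcomp_ov : bcomp n (ov n) = iv n := by funext j; simp [bcomp, ov, iv]

lemma hcn_adj_flp (x w : Fin n → Bool) (i : Fin n) : (HCN n).Adj (x, w) (x, flp i w) := by
  refine ⟨?_, Or.inl ⟨rfl, qn_adj_flp i w⟩⟩
  intro hc
  exact flp_ne_self i w (congrArg Prod.snd hc).symm

lemma hcn_adj_cross {y : Fin n → Bool} (hy : y ≠ ov n) : (HCN n).Adj (ov n, y) (y, ov n) := by
  refine ⟨?_, Or.inr (Or.inl ⟨Ne.symm hy, rfl⟩)⟩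
  intro hc
  exact hy (congrArg Prod.fst hc).symm

lemma hcn_adj_crossv (hn : 0 < n) (y : Fin n → Bool) : (HCN n).Adj (ov n, y) (crossv n y) := by
  by_cases hy : y = ov n
  · subst hy
    rw [crossv_ov]
    refine ⟨?_, Or.inr (Or.inr (Or.inl ⟨rfl, by rw [bcomp_ov]⟩))⟩
    intro hc
    exact ov_ne_iv hn (congrArg Prod.fst hc)
  · rw [crossv_of_ne hy]
    exact hcn_adj_cross hy

def Fcut (n h : ℕ) : Finset (Sym2 ((Fin n → Bool) × (Fin n → Bool))) :=
  ((Finset.univ.filter (Spred n h)).image fun y => s((ov n, y), crossv n y)) ∪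
  (((Finset.univ.filter (Spred n h)) ×ˢ (Finset.univ.filter fun i : Fin n => h ≤ (i : ℕ))).image
    fun p => s((ov n, p.1), (ov n, flp p.2 p.1)))

lemma mem_Fcut {e : Sym2 ((Fin n → Bool) × (Fin n → Bool))} : e ∈ Fcut n h ↔
    (∃ y, Spred n h y ∧ e = s((ov n, y), crossv n y)) ∨
    (∃ y, ∃ i : Fin n, Spred n h y ∧ h ≤ (i : ℕ) ∧ e = s((ov n, y), (ov n, flp i y))) := by
  simp only [Fcut, Finset.mem_union, Finset.mem_image, Finset.mem_filter, Finset.mem_univ,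
    true_and, Finset.mem_product]
  constructor
  · rintro (⟨y, hy, rfl⟩ | ⟨⟨y, i⟩, ⟨hy, hi⟩, rfl⟩)
    · exact Or.inl ⟨y, hy, rfl⟩
    · exact Or.inr ⟨y, i, hy, hi, rfl⟩
  · rintro (⟨y, hy, rfl⟩ | ⟨y, i, hy, hi, rfl⟩)
    · exact Or.inl ⟨y, hy, rfl⟩
    · exact Or.inr ⟨⟨y, i⟩, ⟨hy, hi⟩, rfl⟩

lemma cross_mem_Fcut {y : Fin n → Bool} (hy : Spred n h y) :
    s((ov n, y), crossv n y) ∈ Fcut n h :=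
  mem_Fcut.mpr (Or.inl ⟨y, hy, rfl⟩)

lemma hyp_mem_Fcut {y : Fin n → Bool} {i : Fin n} (hy : Spred n h y) (hi : h ≤ (i : ℕ)) :
    s((ov n, y), (ov n, flp i y)) ∈ Fcut n h :=
  mem_Fcut.mpr (Or.inr ⟨y, i, hy, hi, rfl⟩)

lemma flip_not_mem_Fcut (hn : 0 < n) {x w : Fin n → Bool} {i : Fin n}
    (hc : x ≠ ov n ∨ ¬ (h ≤ (i : ℕ) ∧ (Spred n h w ∨ Spred n h (flp i w)))) :
    s((x, w), (x, flp i w)) ∉ Fcut n h := by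
  intro hm
  rcases mem_Fcut.mp hm with ⟨z, hz, he⟩ | ⟨z, j, hz, hj, he⟩
  · rcases Sym2.eq_iff.mp he with ⟨h1, h2⟩ | ⟨h1, h2⟩
    · have e1 : x = ov n := congrArg Prod.fst h1
      have e2 : x = (crossv n z).1 := congrArg Prod.fst h2
      exact crossv_fst_ne hn z (e2.symm.trans e1)
    · have e1 : x = (crossv n z).1 := congrArg Prod.fst h1
      have e2 : x = ov n := congrArg Prod.fst h2
      exact crossv_fst_ne hn z (e1.symm.trans e2)
  · rcases Sym2.eq_iff.mp he with ⟨h1, h2⟩ | ⟨h1, h2⟩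
    · have hx : x = ov n := congrArg Prod.fst h1
      have hw : w = z := congrArg Prod.snd h1
      have hf : flp i w = flp j z := congrArg Prod.snd h2
      subst hw
      have hij : i = j := flp_inj hf
      rcases hc with hcx | hcn
      · exact hcx hx
      · exact hcn ⟨hij ▸ hj, Or.inl hz⟩
    · have hx : x = ov n := congrArg Prod.fst h1
      have hw : w = flp j z := congrArg Prod.snd h1
      have hz2 : flp i w = z := congrArg Prod.snd h2
      have hij : i = j := flp_flp (y := w) (by rw [hz2.symm] at hw; exact hw.symm)
      rcases hc with hcx | hcn
      · exact hcx hx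
      · exact hcn ⟨hij ▸ hj, Or.inr (by rw [hz2]; exact hz)⟩

lemma crossedge_not_mem_Fcut (hn : 0 < n) {y : Fin n → Bool} (hy : ¬ Spred n h y) :
    s((ov n, y), (y, ov n)) ∉ Fcut n h := by
  intro hm
  rcases mem_Fcut.mp hm with ⟨z, hz, he⟩ | ⟨z, j, hz, hj, he⟩
  · rcases Sym2.eq_iff.mp he with ⟨h1, h2⟩ | ⟨h1, h2⟩
    · have e1 : y = z := congrArg Prod.snd h1
      exact hy (by rw [e1]; exact hz)
    · have e1 : ov n = (crossv n z).1 := congrArg Prod.fst h1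
      exact crossv_fst_ne hn z e1.symm
  · rcases Sym2.eq_iff.mp he with ⟨h1, h2⟩ | ⟨h1, h2⟩
    · have e1 : y = ov n := congrArg Prod.fst h2
      exact hy (by rw [e1]; exact spred_ov)
    · have e1 : y = ov n := congrArg Prod.fst h2
      exact hy (by rw [e1]; exact spred_ov)

lemma card_SF (hh : h ≤ n) : (Finset.univ.filter (Spred n h)).card = 2 ^ h := by
  have key : (Finset.univ.filter (Spred n h)).card = (Finset.univ : Finset (Fin h → Bool)).card := by
    refine Finset.card_bij' (fun y _ => fun j : Fin h => y (Fin.castLE hh j))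
      (fun b _ => fun i : Fin n => if hi : (i : ℕ) < h then b ⟨i, hi⟩ else false)
      (fun a ha => Finset.mem_univ _) ?_ ?_ ?_
    · intro b hb
      simp only [Finset.mem_filter, Finset.mem_univ, true_and]
      intro j hj
      dsimp only
      rw [dif_neg (by omega)]
    · intro y hy
      funext i
      dsimp only
      by_cases hi : (i : ℕ) < h
      · rw [dif_pos hi]
        exact congrArg y (Fin.ext rfl)
      · rw [dif_neg hi]
        have hsy := (Finset.mem_filter.mp hy).2
        exact (hsy i (by omega)).symm
    · intro b hb
      funext j
      dsimp only
      rw [dif_pos (show ((Fin.castLE hh j : Fin n) : ℕ) < h from j.isLt)]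
      exact congrArg b (Fin.ext rfl)
  rw [key, Finset.card_univ]
  simp

lemma card_filter_ge (hh : h ≤ n) :
    (Finset.univ.filter fun i : Fin n => h ≤ (i : ℕ)).card = n - h := by
  have h1 : (Finset.univ.filter fun i : Fin n => (i : ℕ) < h).card = h := by
    have key : (Finset.univ.filter fun i : Fin n => (i : ℕ) < h).card
        = (Finset.univ : Finset (Fin h)).card := by
      refine Finset.card_bij' (fun a ha => (⟨(a : ℕ), (Finset.mem_filter.mp ha).2⟩ : Fin h))
        (fun b _ => Fin.castLE hh b) (fun a ha => Finset.mem_univ _) ?_ ?_ ?_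
      · intro b hb
        simp only [Finset.mem_filter, Finset.mem_univ, true_and]
        exact b.isLt
      · intro a ha
        exact Fin.ext rfl
      · intro b hb
        exact Fin.ext rfl
    rw [key, Finset.card_univ, Fintype.card_fin]
  have h2 := Finset.card_filter_add_card_filter_not
    (s := (Finset.univ : Finset (Fin n))) (p := fun i : Fin n => (i : ℕ) < h)
  have h3 : (Finset.univ.filter fun i : Fin n => ¬ (i : ℕ) < h)
      = (Finset.univ.filter fun i : Fin n => h ≤ (i : ℕ)) := by
    apply Finset.filter_congr
    intro i _
    simp [not_lt]
  rw [Finset.card_univ, Fintype.card_fin, h3] at h2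
  omega

lemma card_Fcut (hn : 0 < n) (hh : h ≤ n) : (Fcut n h).card = 2 ^ h * (n + 1 - h) := by
  classical
  have hdisj : Disjoint
      ((Finset.univ.filter (Spred n h)).image fun y => s((ov n, y), crossv n y))
      (((Finset.univ.filter (Spred n h)) ×ˢ (Finset.univ.filter fun i : Fin n => h ≤ (i : ℕ))).image
        fun p => s((ov n, p.1), (ov n, flp p.2 p.1))) := by
    rw [Finset.disjoint_left]
    intro e he1 he2
    obtain ⟨z, hz, rfl⟩ := Finset.mem_image.mp he1
    obtain ⟨⟨y, i⟩, hyi, he⟩ := Finset.mem_image.mp he2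
    rcases Sym2.eq_iff.mp he.symm with ⟨h1, h2⟩ | ⟨h1, h2⟩
    · exact crossv_fst_ne hn z (congrArg Prod.fst h2 : (crossv n z).1 = _)
    · exact crossv_fst_ne hn z (congrArg Prod.fst h2 : (crossv n z).1 = _)
  have c1 : ((Finset.univ.filter (Spred n h)).image fun y => s((ov n, y), crossv n y)).card
      = 2 ^ h := by
    rw [Finset.card_image_of_injOn, card_SF hh]
    intro a _ b _ hab
    rcases Sym2.eq_iff.mp hab with ⟨h1, h2⟩ | ⟨h1, h2⟩
    · exact congrArg Prod.snd h1
    · exact absurd (congrArg Prod.fst h1).symm (crossv_fst_ne hn b)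
  have c2 : (((Finset.univ.filter (Spred n h)) ×ˢ
        (Finset.univ.filter fun i : Fin n => h ≤ (i : ℕ))).image
        fun p => s((ov n, p.1), (ov n, flp p.2 p.1))).card = 2 ^ h * (n - h) := by
    rw [Finset.card_image_of_injOn, Finset.card_product, card_SF hh, card_filter_ge hh]
    rintro ⟨a, i⟩ ha ⟨b, j⟩ hb hab
    simp only [Finset.coe_product, Set.mem_prod, Finset.mem_coe, Finset.mem_filter,
      Finset.mem_univ, true_and] at ha hb
    rcases Sym2.eq_iff.mp hab with ⟨h1, h2⟩ | ⟨h1, h2⟩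
    · have e1 : a = b := congrArg Prod.snd h1
      subst e1
      have e2 : i = j := flp_inj (congrArg Prod.snd h2)
      rw [e2]
    · exfalso
      have e1 : a = flp j b := congrArg Prod.snd h1
      have e2 : flp i a = b := congrArg Prod.snd h2
      have hij : i = j := flp_flp (y := a) (by rw [← e2] at e1; exact e1.symm)
      have hb1 : b i = false := hb.1 i (hij ▸ hb.2)
      have hb2 : b i = true := by
        rw [← e2, flp_self, ha.1 i ha.2]
        rfl
      rw [hb1] at hb2
      exact Bool.false_ne_true hb2
  unfold Fcut
  rw [Finset.card_union_of_disjoint hdisj, c1, c2]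
  have e : n + 1 - h = (n - h) + 1 := by omega
  rw [e, Nat.mul_succ]
  exact Nat.add_comm _ _

lemma Fcut_subset (hn : 0 < n) : ↑(Fcut n h) ⊆ (HCN n).edgeSet := by
  intro e he
  rw [Finset.mem_coe] at he
  rcases mem_Fcut.mp he with ⟨y, hy, rfl⟩ | ⟨y, i, hy, hi, rfl⟩
  · exact (HCN n).mem_edgeSet.mpr (hcn_adj_crossv hn y)
  · exact (HCN n).mem_edgeSet.mpr (hcn_adj_flp _ _ _)

lemma closed (hn : 0 < n) {u v : (Fin n → Bool) × (Fin n → Bool)}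
    (hadj : ((HCN n).deleteEdges ↑(Fcut n h)).Adj u v)
    (hu : u.1 = ov n ∧ Spred n h u.2) : v.1 = ov n ∧ Spred n h v.2 := by
  obtain ⟨x, y⟩ := u
  obtain ⟨hx, hy⟩ := hu
  dsimp only at hx hy
  subst hx
  rw [SimpleGraph.deleteEdges_adj] at hadj
  obtain ⟨⟨hne, hor⟩, hnotF⟩ := hadj
  rcases hor with ⟨h1, h2⟩ | hca
  · obtain ⟨i, hv2⟩ := qn_adj_decode h2
    by_cases hi : h ≤ (i : ℕ)
    · exfalso
      apply hnotF
      have hv : v = (ov n, flp i y) := Prod.ext h1.symm hv2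
      rw [hv]
      exact Finset.mem_coe.mpr (hyp_mem_Fcut hy hi)
    · refine ⟨h1.symm, ?_⟩
      rw [hv2]
      intro j hj
      have hji : j ≠ i := by
        intro hc
        rw [hc] at hj
        omega
      rw [flp_ne hji]
      exact hy j hj
  · exfalso
    apply hnotF
    rcases hca with ⟨hne2, hveq⟩ | ⟨heq2, hveq⟩ | ⟨hne2, hueq⟩ | ⟨heq2, hueq⟩
    · rw [hveq]
      have hcv : crossv n y = (y, ov n) := crossv_of_ne (fun hc => hne2 hc.symm)
      rw [show ((y, ov n) : _) = crossv n y from hcv.symm]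
      exact Finset.mem_coe.mpr (cross_mem_Fcut hy)
    · have hyo : y = ov n := heq2.symm
      subst hyo
      rw [hveq, show ((bcomp n (ov n), bcomp n (ov n)) : _) = crossv n (ov n) from by
        rw [bcomp_ov, crossv_ov]]
      exact Finset.mem_coe.mpr (cross_mem_Fcut spred_ov)
    · have e1 : ov n = v.2 := congrArg Prod.fst hueq
      have e2 : y = v.1 := congrArg Prod.snd hueq
      have hv : v = (y, ov n) := Prod.ext e2.symm e1.symm
      have hyo : y ≠ ov n := by
        intro hc
        apply hne2
        rw [hv, hc]
      rw [hv, show ((y, ov n) : _) = crossv n y from (crossv_of_ne hyo).symm]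
      exact Finset.mem_coe.mpr (cross_mem_Fcut hy)
    · have e1 : ov n = bcomp n v.1 := congrArg Prod.fst hueq
      have e2 : y = bcomp n v.1 := congrArg Prod.snd hueq
      have hv1 : v.1 = iv n := by
        funext j
        have := congrFun e1 j
        simp only [bcomp, ov] at this
        simp only [iv]
        cases hvj : v.1 j
        · rw [hvj] at this; exact absurd this.symm (by simp)
        · rfl
      have hy0 : y = ov n := by
        rw [e2, ← e1]
      subst hy0
      have hv : v = (iv n, iv n) := Prod.ext hv1 (heq2 ▸ hv1)
      rw [hv, show ((iv n, iv n) : _) = crossv n (ov n) from crossv_ov.symm]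
      exact Finset.mem_coe.mpr (cross_mem_Fcut spred_ov)

lemma bad_unique {w : Fin n → Bool} {a b : Fin n} (ha : h ≤ (a : ℕ)) (hsa : Spred n h (flp a w))
    (hb : h ≤ (b : ℕ)) (hsb : Spred n h (flp b w)) : a = b := by
  by_contra hab
  have h1 := hsa b hb
  rw [flp_ne (Ne.symm hab)] at h1
  have h2 := hsb b hb
  rw [flp_self, h1] at h2
  simp at h2

lemma not_connected (hn : 0 < n) : ¬ ((HCN n).deleteEdges ↑(Fcut n h)).Connected := by
  intro hconn
  obtain ⟨w⟩ := hconn.preconnected (ov n, ov n) (iv n, ov n)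
  have key : ∀ {a b : (Fin n → Bool) × (Fin n → Bool)}
      (w : ((HCN n).deleteEdges ↑(Fcut n h)).Walk a b),
      (a.1 = ov n ∧ Spred n h a.2) → (b.1 = ov n ∧ Spred n h b.2) := by
    intro a b w
    induction w with
    | nil => exact id
    | cons hadj _ ih => exact fun ha => ih (closed hn hadj ha)
  have := key w ⟨rfl, spred_ov⟩
  exact ov_ne_iv hn this.1.symm

end Stmt16Aux

open Stmt16Aux in
open scoped Classical in
/-- HCN_n (n ≥ 2, 0 ≤ h ≤ n) has an h-edge-cut of size 2^h (n+1-h): removing it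
disconnects the graph while every vertex keeps at least h incident edges.
Hence λ^h(HCN_n) ≤ 2^h (n+1-h). -/
theorem stmt16 (n h : ℕ) (hn : 2 ≤ n) (hh : h ≤ n) :
    ∃ F : Finset (Sym2 ((Fin n → Bool) × (Fin n → Bool))),
      ↑F ⊆ (HCN n).edgeSet ∧
      F.card = 2 ^ h * (n + 1 - h) ∧
      ¬ ((HCN n).deleteEdges ↑F).Connected ∧
      ∀ v, h ≤ (Finset.univ.filter
        (fun w => ((HCN n).deleteEdges ↑F).Adj v w)).card := by
  have hn0 : 0 < n := by omega
  refine ⟨Fcut n h, Fcut_subset hn0, card_Fcut hn0 hh, not_connected hn0, ?_⟩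
  rintro ⟨x, w⟩
  by_cases hx : x = ov n
  · subst hx
    by_cases hw : Spred n h w
    · -- w in the subcube: the h low flips survive
      have hle : (Finset.univ : Finset (Fin h)).card ≤ (Finset.univ.filter
          (fun z => ((HCN n).deleteEdges ↑(Fcut n h)).Adj (ov n, w) z)).card := by
        apply Finset.card_le_card_of_injOn
          (fun j : Fin h => ((ov n, flp (Fin.castLE hh j) w) : (Fin n → Bool) × (Fin n → Bool)))
        · intro j _
          simp only [Finset.mem_coe, Finset.mem_filter, Finset.mem_univ, true_and]
          rw [SimpleGraph.deleteEdges_adj]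
          refine ⟨hcn_adj_flp _ _ _, ?_⟩
          rw [Finset.mem_coe]
          refine flip_not_mem_Fcut hn0 (Or.inr ?_)
          rintro ⟨hle2, -⟩
          have hjlt : (j : ℕ) < h := j.isLt
          have : ((Fin.castLE hh j : Fin n) : ℕ) = (j : ℕ) := rfl
          omega
        · intro a _ b _ hab
          exact Fin.castLE_injective hh (flp_inj (congrArg Prod.snd hab))
      simpa using hle
    · -- w outside the subcube
      have hyo : w ≠ ov n := fun hc => hw (by rw [hc]; exact spred_ov)
      have hle : (Finset.univ : Finset (Fin n)).card ≤ (Finset.univ.filter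
          (fun z => ((HCN n).deleteEdges ↑(Fcut n h)).Adj (ov n, w) z)).card := by
        apply Finset.card_le_card_of_injOn
          (fun i : Fin n => if h ≤ (i : ℕ) ∧ Spred n h (flp i w) then ((w, ov n) :
            (Fin n → Bool) × (Fin n → Bool)) else (ov n, flp i w))
        · intro i _
          simp only [Finset.mem_coe, Finset.mem_filter, Finset.mem_univ, true_and]
          rw [SimpleGraph.deleteEdges_adj]
          by_cases hcond : h ≤ (i : ℕ) ∧ Spred n h (flp i w)
          · rw [if_pos hcond]
            refine ⟨hcn_adj_cross hyo, ?_⟩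
            rw [Finset.mem_coe]
            exact crossedge_not_mem_Fcut hn0 hw
          · rw [if_neg hcond]
            refine ⟨hcn_adj_flp _ _ _, ?_⟩
            rw [Finset.mem_coe]
            refine flip_not_mem_Fcut hn0 (Or.inr ?_)
            rintro ⟨hle2, hor⟩
            rcases hor with hsp | hsp
            · exact hw hsp
            · exact hcond ⟨hle2, hsp⟩
        · intro a _ b _ hab
          dsimp only at hab
          by_cases hca : h ≤ (a : ℕ) ∧ Spred n h (flp a w) <;>
            by_cases hcb : h ≤ (b : ℕ) ∧ Spred n h (flp b w)
          · exact bad_unique hca.1 hca.2 hcb.1 hcb.2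
          · rw [if_pos hca, if_neg hcb] at hab
            exact absurd (congrArg Prod.fst hab : w = ov n) hyo
          · rw [if_neg hca, if_pos hcb] at hab
            exact absurd ((congrArg Prod.fst hab).symm : w = ov n) hyo
          · rw [if_neg hca, if_neg hcb] at hab
            exact flp_inj (congrArg Prod.snd hab)
      have hle2 : n ≤ (Finset.univ.filter
          (fun z => ((HCN n).deleteEdges ↑(Fcut n h)).Adj (ov n, w) z)).card := by
        simpa using hle
      omega
  · -- other cluster: all n flips survive
    have hle : (Finset.univ : Finset (Fin n)).card ≤ (Finset.univ.filter
        (fun z => ((HCN n).deleteEdges ↑(Fcut n h)).Adj (x, w) z)).card := by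
      apply Finset.card_le_card_of_injOn
        (fun i : Fin n => ((x, flp i w) : (Fin n → Bool) × (Fin n → Bool)))
      · intro i _
        simp only [Finset.mem_coe, Finset.mem_filter, Finset.mem_univ, true_and]
        rw [SimpleGraph.deleteEdges_adj]
        refine ⟨hcn_adj_flp _ _ _, ?_⟩
        rw [Finset.mem_coe]
        exact flip_not_mem_Fcut hn0 (Or.inl hx)
      · intro a _ b _ hab
        exact flp_inj (congrArg Prod.snd hab)
    have hle2 : n ≤ (Finset.univ.filter
        (fun z => ((HCN n).deleteEdges ↑(Fcut n h)).Adj (x, w) z)).card := by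
      simpa using hle
    omega
end
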